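/- Let C be a minimal [n,k]_{q^m/q} rank-metric code. Then every codeword c ∈ C satisfies rk(c) ≤ dim_{F_q}(σ^rk(C)) - k + 1; in particular the maximum rank of a codeword is at most n - k + 1. -/

import Mathlib

open Module Submodule

/-- The rank support of a vector `v ∈ L^n` over the subfield `K`: the `K`-span of the
rows of the expansion matrix, i.e. the space of all `(φ (v 1), ..., φ (v n))` for
`K`-linear functionals `φ : L → K`. -/
noncomputable def rkSupport (K : Type) {L : Type} [Field K] [Field L] [Algebra K L]
    {n : ℕ} (v : Fin n → L) : Submodule K (Fin n → K) :=
  LinearMap.range (LinearMap.pi (fun i => LinearMap.applyₗ (v i) :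
    Fin n → Module.Dual K L →ₗ[K] K))

section Aux

variable {K L : Type} [Field K] [Field L] [Algebra K L] {n : ℕ}

/-- Coordinatewise inclusion of `K^n` into `L^n`. -/
noncomputable def emb : (Fin n → K) →ₗ[K] (Fin n → L) :=
  LinearMap.pi fun i => (Algebra.linearMap K L).comp (LinearMap.proj i)

lemma mem_rkSupport_of (v : Fin n → L) (φ : Module.Dual K L) :
    (fun i => φ (v i)) ∈ rkSupport K v :=
  ⟨φ, rfl⟩

/-- Extension of scalars of an endomorphism of `K^n` to an endomorphism of `L^n`. -/
noncomputable def extL (f : (Fin n → K) →ₗ[K] (Fin n → K)) :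
    (Fin n → L) →ₗ[L] (Fin n → L) :=
  Matrix.toLin' ((LinearMap.toMatrix' f).map (algebraMap K L))

lemma extL_key (f : (Fin n → K) →ₗ[K] (Fin n → K)) (v : Fin n → L)
    (φ : Module.Dual K L) :
    (fun i => φ (extL (K := K) f v i)) = f (fun i => φ (v i)) := by
  conv_rhs => rw [← Matrix.toLin'_toMatrix' f]
  funext i
  simp only [extL, Matrix.toLin'_apply, Matrix.mulVec, dotProduct, Matrix.map_apply]
  rw [map_sum]
  exact Finset.sum_congr rfl fun j _ => by
    rw [← Algebra.smul_def, map_smul, smul_eq_mul]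

lemma extL_eq_zero_iff (f : (Fin n → K) →ₗ[K] (Fin n → K)) (v : Fin n → L) :
    extL (K := K) f v = 0 ↔ rkSupport K v ≤ LinearMap.ker f := by
  constructor
  · rintro h x ⟨φ, rfl⟩
    have hkey := extL_key (L := L) f v φ
    rw [h] at hkey
    simp only [LinearMap.mem_ker]
    show f (fun i => φ (v i)) = 0
    rw [← hkey]
    funext i; simp
  · intro h
    funext i
    show extL (K := K) f v i = 0
    rw [← Module.forall_dual_apply_eq_zero_iff K (extL (K := K) f v i)]
    intro φ
    have h2 := congrFun (extL_key (L := L) f v φ) i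
    have h3 : f (fun i => φ (v i)) = 0 := h (mem_rkSupport_of v φ)
    rw [h2, h3]; rfl

lemma rkSupport_extL_le (f : (Fin n → K) →ₗ[K] (Fin n → K)) (v : Fin n → L) :
    rkSupport K (extL (K := K) f v) ≤ (rkSupport K v).map f := by
  rintro x ⟨φ, rfl⟩
  exact ⟨fun i => φ (v i), mem_rkSupport_of v φ, (extL_key (L := L) f v φ).symm⟩

lemma mem_span_emb (v : Fin n → L) :
    v ∈ Submodule.span L (emb (L := L) '' (rkSupport K v : Set (Fin n → K))) := by
  classical
  let b := Basis.ofVectorSpace K L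
  let s : Finset _ := Finset.univ.biUnion fun i => (b.repr (v i)).support
  have hv : v = ∑ x ∈ s, b x • emb (L := L) (fun i => b.repr (v i) x) := by
    funext i
    rw [Finset.sum_apply]
    have hterm : ∀ x ∈ s, (b x • emb (L := L) (fun i => b.repr (v i) x)) i
        = b.repr (v i) x • b x := by
      intro x _
      simp only [Pi.smul_apply, emb, LinearMap.pi_apply, LinearMap.comp_apply,
        Algebra.linearMap_apply, LinearMap.proj_apply, smul_eq_mul, Algebra.smul_def]
      ring
    rw [Finset.sum_congr rfl hterm]
    rw [← Finset.sum_subset (s₁ := (b.repr (v i)).support)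
      (fun x hx => Finset.mem_biUnion.2 ⟨i, Finset.mem_univ i, hx⟩)
      (fun x _ hx => by rw [Finsupp.notMem_support_iff.1 hx, zero_smul])]
    conv_lhs => rw [← b.linearCombination_repr (v i)]
    rw [Finsupp.linearCombination_apply, Finsupp.sum]
  set U := rkSupport K v with hU
  rw [hv]
  apply sum_mem
  intro x hx
  refine Submodule.smul_mem _ _ (Submodule.subset_span ?_)
  have hmem : (fun i => b.repr (v i) x) ∈ U :=
    ⟨b.coord x, by funext i; simp [rkSupport, Basis.coord_apply]⟩
  exact ⟨fun i => b.repr (v i) x, hmem, rfl⟩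

lemma finrank_span_emb (U : Submodule K (Fin n → K)) :
    finrank L (Submodule.span L (emb (L := L) '' (U : Set (Fin n → K)))) ≤ finrank K U := by
  classical
  let bU := Module.finBasis K U
  set t : Set (Fin n → K) := Set.range fun i => (bU i : Fin n → K) with ht
  have h1 : Submodule.span K t = U := by
    have e0 : t = U.subtype '' (Set.range bU) := by
      rw [ht, ← Set.range_comp]; rfl
    rw [e0, ← Submodule.map_span, bU.span_eq, Submodule.map_top, Submodule.range_subtype]
  have h2 : (emb (L := L) '' (U : Set (Fin n → K))) ⊆
      (Submodule.span L (emb (L := L) '' t) : Set (Fin n → L)) := by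
    rw [← h1]
    have e1 : emb (L := L) '' (Submodule.span K t : Set (Fin n → K))
        = (Submodule.map (emb (L := L)) (Submodule.span K t) : Set (Fin n → L)) := rfl
    rw [e1, Submodule.map_span]
    exact Submodule.span_subset_span K L _
  have h3 : Submodule.span L (emb (L := L) '' (U : Set (Fin n → K)))
      ≤ Submodule.span L (emb (L := L) '' t) := Submodule.span_le.2 h2
  refine (Submodule.finrank_mono h3).trans ?_
  have h4 : emb (L := L) '' t = Set.range fun i => emb (L := L) (bU i : Fin n → K) := by
    rw [ht, ← Set.range_comp]; rfl
  rw [h4]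
  have h5 := finrank_range_le_card (R := L) fun i => emb (L := L) (bU i : Fin n → K)
  simpa [Set.finrank] using h5

lemma finrank_le_rkSup (D : Submodule L (Fin n → L)) :
    finrank L D ≤ finrank K ↥(⨆ w ∈ D, rkSupport K w) := by
  set U := ⨆ w ∈ D, rkSupport K w with hU
  have hD : D ≤ Submodule.span L (emb (L := L) '' (U : Set (Fin n → K))) := by
    intro w hw
    have h1 : rkSupport K w ≤ U := le_iSup₂ (f := fun w _ => rkSupport K w) w hw
    exact Submodule.span_mono (Set.image_mono h1) (mem_span_emb w)
  exact (Submodule.finrank_mono hD).trans (finrank_span_emb U)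

lemma sup_rk_map_le (f : (Fin n → K) →ₗ[K] (Fin n → K)) (C : Submodule L (Fin n → L)) :
    (⨆ w ∈ Submodule.map (extL (K := K) (L := L) f) C, rkSupport K w)
      ≤ Submodule.map f (⨆ v ∈ C, rkSupport K v) := by
  refine iSup₂_le ?_
  rintro _ ⟨v, hv, rfl⟩
  refine (rkSupport_extL_le f v).trans (Submodule.map_mono ?_)
  exact le_iSup₂ (f := fun v _ => rkSupport K v) v hv

end Aux

set_option maxHeartbeats 2000000 in
theorem stmt_15 {K L : Type} [Field K] [Field L] [Algebra K L] {n k : ℕ}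
    (C : Submodule L (Fin n → L)) (hk : Module.finrank L C = k)
    (hmin : ∀ v ∈ C, ∀ v' ∈ C, rkSupport K v' ≤ rkSupport K v → ∃ α : L, v' = α • v) :
    ∀ c ∈ C,
      Module.finrank K (rkSupport K c) + k ≤
        Module.finrank K ↥(⨆ v ∈ C, rkSupport K v) + 1 ∧
      Module.finrank K (rkSupport K c) + k ≤ n + 1 := by
  intro c hc
  classical
  set Sig := ⨆ v ∈ C, rkSupport K v with hSig
  set S := rkSupport K c with hS
  have hSsig : S ≤ Sig := le_iSup₂ (f := fun v _ => rkSupport K v) c hc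
  obtain ⟨T, hT⟩ := S.exists_isCompl
  set π : (Fin n → K) →ₗ[K] (Fin n → K) :=
    T.subtype ∘ₗ T.projectionOnto S hT.symm with hπ
  have hker : LinearMap.ker π = S := by
    rw [hπ, LinearMap.ker_comp, Submodule.ker_subtype, Submodule.comap_bot,
      Submodule.ker_projectionOnto]
  have hsub : ∀ x, x - π x ∈ S := by
    intro x
    have h0 := Submodule.projection_add_projection_eq_self hT x
    have h1 : x - π x = (S.projectionOnto T hT x : Fin n → K) := by
      show x - ((T.projectionOnto S hT.symm x : Fin n → K)) = _
      rw [Submodule.coe_projectionOnto_apply, Submodule.coe_projectionOnto_apply]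
      exact (eq_sub_of_add_eq h0).symm
    rw [h1]; exact SetLike.coe_mem _
  have hmapSig : Submodule.map π Sig ≤ Sig := by
    rintro _ ⟨x, hx, rfl⟩
    have h1 : π x = x - (x - π x) := (sub_sub_cancel x (π x)).symm
    rw [h1]
    exact Sig.sub_mem hx (hSsig (hsub x))
  have hSd : Disjoint S (Submodule.map π Sig) := by
    have h1 : Submodule.map π Sig ≤ T := by
      rintro _ ⟨x, _, rfl⟩
      exact (T.projectionOnto S hT.symm x).2
    exact hT.disjoint.mono_right h1
  have hcount : finrank K S + finrank K (Submodule.map π Sig) ≤ finrank K Sig := by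
    rw [← Submodule.finrank_sup_add_finrank_inf_eq]
    rw [hSd.eq_bot, finrank_bot]
    simpa using Submodule.finrank_mono (sup_le hSsig hmapSig)
  set D := Submodule.map (extL (K := K) (L := L) π) C with hD
  have hkD : k ≤ finrank L D + 1 := by
    set f := (extL (K := K) (L := L) π).comp C.subtype with hf
    have h5 := LinearMap.finrank_range_add_finrank_ker f
    have hr : LinearMap.range f = D := by
      rw [hf, LinearMap.range_comp, Submodule.range_subtype]
    have hkk : finrank L (LinearMap.ker f) ≤ 1 := by
      have hle : LinearMap.ker f ≤ Submodule.span L {(⟨c, hc⟩ : C)} := by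
        intro x hx
        have hx0 : extL (K := K) (L := L) π x.1 = 0 := hx
        have hσ : rkSupport K x.1 ≤ S := by
          rw [← hker]; exact (extL_eq_zero_iff π x.1).1 hx0
        obtain ⟨α, hα⟩ := hmin c hc x.1 x.2 hσ
        exact Submodule.mem_span_singleton.2 ⟨α, (Subtype.ext hα).symm⟩
      refine (Submodule.finrank_mono hle).trans ?_
      by_cases h0 : (⟨c, hc⟩ : C) = 0
      · rw [h0]
        rw [Submodule.span_zero_singleton, finrank_bot]
        omega
      · rw [finrank_span_singleton h0]
    rw [hr, hk] at h5
    omega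
  have h6 : (⨆ w ∈ D, rkSupport K w) ≤ Submodule.map π Sig := by
    rw [hD, hSig]; exact sup_rk_map_le π C
  have h7 := Submodule.finrank_mono (R := K) h6
  have hDSig : finrank L D ≤ finrank K (Submodule.map π Sig) :=
    (finrank_le_rkSup D).trans h7
  have hSign : finrank K Sig ≤ n := by
    have := Submodule.finrank_le Sig
    rwa [Module.finrank_pi, Fintype.card_fin] at this
  constructor <;> omega
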